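/- arXiv:1504.00800 — 2 statements merged into one kernel-verified Lean document; each statement's English description precedes it below -/
import Mathlib

section
/- Let n, m ≥ 1 and let A_1, …, A_m be n×n nonnegative real matrices such that for all i, j there exists l with (A_l)_{ij} > 0 or (A_l)_{ji} > 0. Define B by B_{ij} = max_{1≤l≤m} max((A_l)_{ij}, ((A_l)_{ji})^{-}) where t^{-} = 1/t if t > 0 and t^{-} = 0 otherwise, and let μ = λ(B) be the max-times spectral radius of B. Then the minimum over positive vectors x ∈ ℝ_{>0}^n of max_{1≤l≤m} ρ(A_l, x) equals μ, and the minimum is attained. -/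
open scoped BigOperators

noncomputable section

/-- The max-times spectral radius (maximum geometric cycle mean) of a
nonnegative `n × n` real matrix. -/
def mtSpecRad {n : ℕ} (A : Matrix (Fin n) (Fin n) ℝ) : ℝ :=
  sSup { r : ℝ | ∃ (k : ℕ) (hk : 0 < k), k ≤ n ∧ ∃ f : Fin k → Fin n,
    r = (∏ t : Fin k, A (f t) (f ⟨((t : ℕ) + 1) % k, Nat.mod_lt _ hk⟩)) ^ ((k : ℝ)⁻¹) }

/-- The maximum cycle mean of a real `n × n` matrix (max-plus spectral radius). -/
def mpCycleMean {n : ℕ} (A : Matrix (Fin n) (Fin n) ℝ) : ℝ :=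
  sSup { r : ℝ | ∃ (k : ℕ) (hk : 0 < k), k ≤ n ∧ ∃ f : Fin k → Fin n,
    r = (∑ t : Fin k, A (f t) (f ⟨((t : ℕ) + 1) % k, Nat.mod_lt _ hk⟩)) / (k : ℝ) }

/-- Max-times matrix product. -/
def mtMul {n : ℕ} (A B : Matrix (Fin n) (Fin n) ℝ) : Matrix (Fin n) (Fin n) ℝ :=
  Matrix.of fun i j => ⨆ k : Fin n, A i k * B k j

/-- Max-times matrix powers, with `A^{⊗0} = I`. -/
def mtPow {n : ℕ} (A : Matrix (Fin n) (Fin n) ℝ) : ℕ → Matrix (Fin n) (Fin n) ℝ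
  | 0 => Matrix.of fun i j => if i = j then 1 else 0
  | (k + 1) => mtMul (mtPow A k) A

/-- Max-times Kleene star: entrywise maximum of `I, S, S^{⊗2}, …, S^{⊗(n-1)}`. -/
def mtStar {n : ℕ} (S : Matrix (Fin n) (Fin n) ℝ) : Matrix (Fin n) (Fin n) ℝ :=
  Matrix.of fun i j => ⨆ k : Fin n, mtPow S (k : ℕ) i j

/-- Max-times matrix-vector product. -/
def mtVecMul {n : ℕ} (S : Matrix (Fin n) (Fin n) ℝ) (u : Fin n → ℝ) : Fin n → ℝ :=
  fun i => ⨆ j, S i j * u j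

/-- Max-plus matrix product. -/
def mpMul {n : ℕ} (A B : Matrix (Fin n) (Fin n) ℝ) : Matrix (Fin n) (Fin n) ℝ :=
  Matrix.of fun i j => ⨆ k : Fin n, (A i k + B k j)

/-- `mpPow A k` is the max-plus power `A^{⊗(k+1)}`. -/
def mpPow {n : ℕ} (A : Matrix (Fin n) (Fin n) ℝ) : ℕ → Matrix (Fin n) (Fin n) ℝ
  | 0 => A
  | (k + 1) => mpMul (mpPow A k) A

/-- Max-plus Kleene star: `S^*_{ii} = max(0, max_{1≤k≤n-1} (S^{⊗k})_{ii})` and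
`S^*_{ij} = max_{1≤k≤n-1} (S^{⊗k})_{ij}` for `i ≠ j`. -/
def mpStar {n : ℕ} (S : Matrix (Fin n) (Fin n) ℝ) : Matrix (Fin n) (Fin n) ℝ :=
  Matrix.of fun i j =>
    if i = j then max 0 (⨆ k : Fin (n - 1), mpPow S (k : ℕ) i j)
    else ⨆ k : Fin (n - 1), mpPow S (k : ℕ) i j

/-- Max-plus matrix-vector product. -/
def mpVecMul {n : ℕ} (S : Matrix (Fin n) (Fin n) ℝ) (x : Fin n → ℝ) : Fin n → ℝ :=
  fun i => ⨆ j, (S i j + x j)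

/-- Chebyshev-like (max-times) distance between a nonnegative matrix `A` and the
rank-one reciprocal matrix with entries `x i / x j`. -/
def mtRho {n : ℕ} (A : Matrix (Fin n) (Fin n) ℝ) (x : Fin n → ℝ) : ℝ :=
  max (⨆ p : Fin n × Fin n, A p.1 p.2 * x p.2 / x p.1)
    (sSup { r : ℝ | ∃ i j, 0 < A i j ∧ r = x i / (A i j * x j) })

/-- The alternating max-times product `A ⊗ C^{⊗ i₁} ⊗ A ⊗ C^{⊗ i₂} ⊗ ⋯ ⊗ A ⊗ C^{⊗ i_k}`. -/
def mtChain {n : ℕ} (A C : Matrix (Fin n) (Fin n) ℝ) :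
    (k : ℕ) → (Fin k → ℕ) → Matrix (Fin n) (Fin n) ℝ
  | 0, _ => Matrix.of fun i j => if i = j then 1 else 0
  | (k + 1), f => mtMul (mtMul A (mtPow C (f 0))) (mtChain A C k (fun t => f t.succ))

/-- The optimal value `θ` of the constrained max-times approximation problem. -/
def mtTheta {n : ℕ} (A C : Matrix (Fin n) (Fin n) ℝ) : ℝ :=
  max (mtSpecRad A)
    (sSup { r : ℝ | ∃ k : ℕ, 0 < k ∧ k ≤ n - 1 ∧ ∃ f : Fin k → ℕ,
      1 ≤ ∑ t, f t ∧ (∑ t, f t) ≤ n - k ∧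
      r = (⨆ i, mtChain A C k f i i) ^ ((k : ℝ)⁻¹) })


set_option linter.unusedSectionVars false

lemma le_fsup {ι : Type*} [Finite ι] (f : ι → ℝ) (i : ι) : f i ≤ ⨆ j, f j :=
  le_ciSup (Set.Finite.bddAbove (Set.finite_range f)) i

lemma fsup_le {ι : Type*} [Nonempty ι] {f : ι → ℝ} {a : ℝ} (h : ∀ i, f i ≤ a) :
    ⨆ i, f i ≤ a := ciSup_le h

/-- walk product -/
def wprod {n : ℕ} (S : Matrix (Fin n) (Fin n) ℝ) (g : ℕ → Fin n) (k : ℕ) : ℝ :=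
  ∏ t ∈ Finset.range k, S (g t) (g (t + 1))

section walks
variable {n : ℕ} {S : Matrix (Fin n) (Fin n) ℝ} (hS : ∀ i j, 0 < S i j)
include hS

lemma wprod_nonneg (g : ℕ → Fin n) (k : ℕ) : 0 ≤ wprod S g k :=
  Finset.prod_nonneg fun _ _ => (hS _ _).le

lemma mtPow_succ (k : ℕ) (i j : Fin n) :
    mtPow S (k+1) i j = ⨆ t : Fin n, mtPow S k i t * S t j := rfl

lemma mtPow_zero (i j : Fin n) : mtPow S 0 i j = if i = j then 1 else 0 := rfl

lemma mtPow_nonneg (k : ℕ) (i j : Fin n) : 0 ≤ mtPow S k i j := by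
  induction k generalizing i j with
  | zero => rw [mtPow_zero hS]; split <;> norm_num
  | succ k ih =>
      rw [mtPow_succ hS]
      exact le_trans (mul_nonneg (ih i j) (hS j j).le) (le_fsup (fun t => mtPow S k i t * S t j) j)

lemma wprod_le_mtPow (g : ℕ → Fin n) (k : ℕ) :
    wprod S g k ≤ mtPow S k (g 0) (g k) := by
  induction k with
  | zero => simp [wprod, mtPow_zero hS]
  | succ k ih =>
      have h1 : wprod S g (k+1) = wprod S g k * S (g k) (g (k+1)) :=
        Finset.prod_range_succ _ _
      rw [h1, mtPow_succ hS]
      exact le_trans (mul_le_mul_of_nonneg_right ih (hS _ _).le)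
        (le_fsup (fun t => mtPow S k (g 0) t * S t (g (k+1))) (g k))

lemma mtPow_exists_walk (k : ℕ) (i j : Fin n) :
    ∃ g : ℕ → Fin n, g 0 = i ∧ g (k+1) = j ∧ mtPow S (k+1) i j ≤ wprod S g (k+1) := by
  haveI : Nonempty (Fin n) := ⟨i⟩
  induction k generalizing j with
  | zero =>
      refine ⟨fun s => if s = 0 then i else j, by simp, by simp, ?_⟩
      have hw : wprod S (fun s => if s = 0 then i else j) 1 = S i j := by
        simp [wprod]
      rw [hw, mtPow_succ hS]
      refine fsup_le fun t => ?_
      rw [mtPow_zero hS]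
      split
      · next h => subst h; simp
      · simp [(hS i j).le]
  | succ k ih =>
      obtain ⟨t0, ht0⟩ := Finite.exists_max (fun t : Fin n => mtPow S (k+1) i t * S t j)
      obtain ⟨g, hg0, hgk, hgle⟩ := ih t0
      refine ⟨fun s => if s ≤ k + 1 then g s else j, by simpa using hg0, by simp, ?_⟩
      set g' : ℕ → Fin n := fun s => if s ≤ k + 1 then g s else j with hg'
      have h1 : wprod S g' (k+2) = wprod S g' (k+1) * S (g' (k+1)) (g' (k+2)) :=
        Finset.prod_range_succ _ _
      have h2 : wprod S g' (k+1) = wprod S g (k+1) := by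
        refine Finset.prod_congr rfl fun t ht => ?_
        have ht' : t < k + 1 := Finset.mem_range.mp ht
        have ha : t ≤ k + 1 := by omega
        have hb : t + 1 ≤ k + 1 := by omega
        have e1 : g' t = g t := by simp [hg', ha]
        have e2 : g' (t+1) = g (t+1) := by simp [hg', hb]
        rw [e1, e2]
      have e3 : g' (k+1) = t0 := by simp [hg', hgk]
      have e4 : g' (k+2) = j := by simp [hg']
      rw [h1, h2, e3, e4]
      calc mtPow S (k+2) i j ≤ mtPow S (k+1) i t0 * S t0 j := fsup_le ht0
        _ ≤ wprod S g (k+1) * S t0 j := mul_le_mul_of_nonneg_right hgle (hS _ _).le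

end walks


section splice
variable {n : ℕ} {S : Matrix (Fin n) (Fin n) ℝ} (hS : ∀ i j, 0 < S i j)
  (hC : ∀ (d : ℕ) (hd : 0 < d), d ≤ n → ∀ c : Fin d → Fin n,
    (∏ t : Fin d, S (c t) (c ⟨((t : ℕ) + 1) % d, Nat.mod_lt _ hd⟩)) ≤ 1)
include hS hC

lemma cycle_range_le_one (g : ℕ → Fin n) (a b : ℕ) (hab : a < b) (hbn : b ≤ n)
    (hg : g a = g b) :
    ∏ t ∈ Finset.range (b - a), S (g (a + t)) (g (a + t + 1)) ≤ 1 := by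
  set d := b - a with hd
  have hd0 : 0 < d := by omega
  have hdn : d ≤ n := by omega
  set c : Fin d → Fin n := fun t => g (a + (t : ℕ)) with hc
  have key : ∀ t : Fin d, S (c t) (c ⟨((t : ℕ) + 1) % d, Nat.mod_lt _ hd0⟩)
      = S (g (a + (t : ℕ))) (g (a + (t : ℕ) + 1)) := by
    intro t
    congr 1
    rcases Nat.lt_or_ge ((t : ℕ) + 1) d with h | h
    · simp [hc, Nat.mod_eq_of_lt h, Nat.add_assoc]
    · have ht1 : (t : ℕ) + 1 = d := by omega
      have : ((t : ℕ) + 1) % d = 0 := by rw [ht1, Nat.mod_self]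
      simp only [hc, this]
      have : a + ((t : ℕ) + 1) = b := by omega
      rw [Nat.add_zero, hg, ← this, ← Nat.add_assoc]
  calc (∏ t ∈ Finset.range d, S (g (a + t)) (g (a + t + 1)))
      = ∏ t : Fin d, S (g (a + (t:ℕ))) (g (a + (t:ℕ) + 1)) :=
        (Fin.prod_univ_eq_prod_range (fun s => S (g (a + s)) (g (a + s + 1))) d).symm
    _ = ∏ t : Fin d, S (c t) (c ⟨((t : ℕ) + 1) % d, Nat.mod_lt _ hd0⟩) :=
        Finset.prod_congr rfl fun t _ => (key t).symm
    _ ≤ 1 := hC d hd0 hdn c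

lemma walk_le_star (hn : 0 < n) (j0 : Fin n) :
    ∀ k (g : ℕ → Fin n), g k = j0 →
      wprod S g k ≤ ⨆ k' : Fin n, mtPow S (k' : ℕ) (g 0) j0 := by
  intro k
  induction k using Nat.strong_induction_on with
  | _ k IH =>
  intro g hgk
  rcases Nat.lt_or_ge k n with hk | hk
  · have := wprod_le_mtPow hS g k
    rw [hgk] at this
    exact le_trans this (le_fsup (fun k' : Fin n => mtPow S (k' : ℕ) (g 0) j0) ⟨k, hk⟩)
  · -- pigeonhole on g restricted to Fin (n+1)
    obtain ⟨x, y, hxy, hgxy⟩ := Fintype.exists_ne_map_eq_of_card_lt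
      (fun t : Fin (n+1) => g (t : ℕ)) (by simp)
    -- wlog x < y
    obtain ⟨a, b, hab, hgab⟩ : ∃ a b : ℕ, a < b ∧ b ≤ n ∧ g a = g b := by
      rcases lt_or_gt_of_ne hxy with h | h
      · exact ⟨x, y, Fin.lt_iff_val_lt_val.mp h, by omega, hgxy⟩
      · exact ⟨y, x, Fin.lt_iff_val_lt_val.mp h, by omega, hgxy.symm⟩
    obtain ⟨hbn, hgab⟩ := hgab
    set d := b - a with hdd
    have hd0 : 0 < d := by omega
    set e := k - b with hee
    set g' : ℕ → Fin n := fun s => if s < a then g s else g (s + d) with hg'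
    have hkeq : k = a + (d + e) := by omega
    have hadb : a + d = b := by omega
    -- product decomposition of the original walk
    have hsplit : wprod S g k =
        (∏ t ∈ Finset.range a, S (g t) (g (t+1))) *
        ((∏ t ∈ Finset.range d, S (g (a+t)) (g (a+t+1))) *
         (∏ t ∈ Finset.range e, S (g (a+(d+t))) (g (a+(d+t)+1)))) := by
      rw [wprod, hkeq, Finset.prod_range_add, Finset.prod_range_add]
    -- the spliced walk
    have hg'0 : g' 0 = g 0 := by
      rcases Nat.eq_zero_or_pos a with h0 | h0
      · have : g' 0 = g (0 + d) := by simp [hg', h0]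
        rw [this]
        have : 0 + d = b := by omega
        rw [this, ← hgab]
        have : a = 0 := h0
        rw [this]
      · simp [hg', h0]
    have hg'end : g' (a + e) = j0 := by
      have h1 : ¬ (a + e < a) := by omega
      have h2 : a + e + d = k := by omega
      simp only [hg', h1, if_false, h2, hgk]
    have hsplice : wprod S g' (a + e) =
        (∏ t ∈ Finset.range a, S (g t) (g (t+1))) *
        (∏ t ∈ Finset.range e, S (g (a+(d+t))) (g (a+(d+t)+1))) := by
      rw [wprod, Finset.prod_range_add]
      congr 1
      · refine Finset.prod_congr rfl fun t ht => ?_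
        have ht' : t < a := Finset.mem_range.mp ht
        have e1 : g' t = g t := by simp [hg', ht']
        have e2 : g' (t + 1) = g (t + 1) := by
          rcases Nat.lt_or_ge (t+1) a with h | h
          · simp [hg', h]
          · have ht1 : t + 1 = a := by omega
            have hna : ¬ (t + 1 < a) := by omega
            simp only [hg', hna, if_false]
            rw [ht1, hadb, ← hgab]
        rw [e1, e2]
      · refine Finset.prod_congr rfl fun t ht => ?_
        have e1 : g' (a + t) = g (a + (d + t)) := by
          have h1 : ¬ (a + t < a) := by omega
          have h2 : a + t + d = a + (d + t) := by omega
          simp only [hg', h1, if_false, h2]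
        have e2 : g' (a + t + 1) = g (a + (d + t) + 1) := by
          have h1 : ¬ (a + t + 1 < a) := by omega
          have h2 : a + t + 1 + d = a + (d + t) + 1 := by omega
          simp only [hg', h1, if_false, h2]
        rw [e1, e2]
    -- compare
    have hcyc := cycle_range_le_one hS hC g a b hab hbn hgab
    have hX : 0 ≤ ∏ t ∈ Finset.range a, S (g t) (g (t+1)) :=
      Finset.prod_nonneg fun _ _ => (hS _ _).le
    have hZ : 0 ≤ ∏ t ∈ Finset.range e, S (g (a+(d+t))) (g (a+(d+t)+1)) :=
      Finset.prod_nonneg fun _ _ => (hS _ _).le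
    have hle : wprod S g k ≤ wprod S g' (a + e) := by
      rw [hsplit, hsplice]
      refine mul_le_mul_of_nonneg_left ?_ hX
      calc (∏ t ∈ Finset.range d, S (g (a+t)) (g (a+t+1))) *
            (∏ t ∈ Finset.range e, S (g (a+(d+t))) (g (a+(d+t)+1)))
          ≤ 1 * (∏ t ∈ Finset.range e, S (g (a+(d+t))) (g (a+(d+t)+1))) :=
            mul_le_mul_of_nonneg_right hcyc hZ
        _ = _ := one_mul _
    have hlt : a + e < k := by omega
    have := IH (a + e) hlt g' hg'end
    rw [hg'0] at this
    exact le_trans hle this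

end splice


section subeigen
variable {n : ℕ} {S : Matrix (Fin n) (Fin n) ℝ} (hS : ∀ i j, 0 < S i j)
  (hC : ∀ (d : ℕ) (hd : 0 < d), d ≤ n → ∀ c : Fin d → Fin n,
    (∏ t : Fin d, S (c t) (c ⟨((t : ℕ) + 1) % d, Nat.mod_lt _ hd⟩)) ≤ 1)
  (hn : 0 < n) (j0 : Fin n)
include hS hn

lemma star_col_pos (i : Fin n) : 0 < ⨆ k' : Fin n, mtPow S (k' : ℕ) i j0 := by
  by_cases h : i = j0
  · refine lt_of_lt_of_le ?_
      (le_fsup (fun k' : Fin n => mtPow S (k' : ℕ) i j0) ⟨0, hn⟩)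
    simp [mtPow_zero hS, h]
  · have h2 : 1 < n := by
      have := Fin.val_ne_of_ne h
      have hi := i.isLt; have hj := j0.isLt
      omega
    refine lt_of_lt_of_le ?_
      (le_fsup (fun k' : Fin n => mtPow S (k' : ℕ) i j0) ⟨1, h2⟩)
    have : mtPow S 0 i i * S i j0 ≤ mtPow S 1 i j0 :=
      le_fsup (fun t => mtPow S 0 i t * S t j0) i
    have h3 : mtPow S 0 i i * S i j0 = S i j0 := by simp [mtPow_zero hS]
    simp only [Fin.val_mk]
    calc (0:ℝ) < S i j0 := hS i j0
      _ = mtPow S 0 i i * S i j0 := h3.symm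
      _ ≤ mtPow S 1 i j0 := this

include hC in
lemma star_col_subeigen (i t : Fin n) :
    S i t * (⨆ k' : Fin n, mtPow S (k' : ℕ) t j0) ≤ ⨆ k' : Fin n, mtPow S (k' : ℕ) i j0 := by
  set y : Fin n → ℝ := fun i => ⨆ k' : Fin n, mtPow S (k' : ℕ) i j0 with hy
  haveI : Nonempty (Fin n) := ⟨i⟩
  have key : ∀ k' : Fin n, mtPow S (k' : ℕ) t j0 ≤ y i / S i t := by
    intro k'
    rw [le_div_iff₀ (hS i t)]
    -- goal : mtPow S k' t j0 * S i t ≤ y i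
    rcases Nat.eq_zero_or_pos (k' : ℕ) with h0 | h0
    · rw [h0, mtPow_zero hS]
      by_cases h : t = j0
      · subst h
        rw [if_pos rfl, one_mul]
        have : wprod S (fun s => if s = 0 then i else t) 1 ≤ y i := by
          have := walk_le_star hS hC hn t 1 (fun s => if s = 0 then i else t) (by simp)
          simpa using this
        simpa [wprod] using this
      · rw [if_neg h, zero_mul]
        exact (star_col_pos hS hn j0 i).le
    · obtain ⟨k, hk⟩ : ∃ k, (k' : ℕ) = k + 1 := ⟨(k' : ℕ) - 1, by omega⟩
      rw [hk]
      obtain ⟨g, hg0, hgend, hgle⟩ := mtPow_exists_walk hS k t j0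
      set g'' : ℕ → Fin n := fun s => if s = 0 then i else g (s - 1) with hg''
      have hw : wprod S g'' (k+2) = wprod S g (k+1) * S i t := by
        have h0 : (∏ s ∈ Finset.range (k+1+1), S (g'' s) (g'' (s+1))) =
            (∏ s ∈ Finset.range (k+1), S (g'' (s+1)) (g'' (s+1+1))) * S (g'' 0) (g'' (0+1)) :=
          Finset.prod_range_succ' (fun s => S (g'' s) (g'' (s+1))) (k+1)
        have h0' : wprod S g'' (k+2) =
            (∏ s ∈ Finset.range (k+1), S (g'' (s+1)) (g'' (s+1+1))) * S (g'' 0) (g'' (0+1)) := h0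
        rw [h0']
        have eA : (∏ s ∈ Finset.range (k+1), S (g'' (s+1)) (g'' (s+1+1))) =
            ∏ s ∈ Finset.range (k+1), S (g s) (g (s+1)) := by
          refine Finset.prod_congr rfl fun s _ => ?_
          have e1 : g'' (s+1) = g s := by simp [hg'']
          have e2 : g'' (s+1+1) = g (s+1) := by simp [hg'']
          rw [e1, e2]
        have eB : S (g'' 0) (g'' (0+1)) = S i t := by
          have e1 : g'' 0 = i := by simp [hg'']
          have e2 : g'' (0+1) = g 0 := by simp [hg'']
          rw [e1, e2, hg0]
        rw [eA, eB]
        rfl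
      have hwle : wprod S g'' (k+2) ≤ y i := by
        have hend : g'' (k+2) = j0 := by
          have : g'' (k+2) = g (k+1) := by simp [hg'']
          rw [this, hgend]
        have := walk_le_star hS hC hn j0 (k+2) g'' hend
        have hg0'' : g'' 0 = i := by simp [hg'']
        rwa [hg0''] at this
      calc mtPow S (k+1) t j0 * S i t ≤ wprod S g (k+1) * S i t :=
            mul_le_mul_of_nonneg_right hgle (hS i t).le
        _ = wprod S g'' (k+2) := hw.symm
        _ ≤ y i := hwle
  have h1 : y t ≤ y i / S i t := fsup_le key
  calc S i t * y t ≤ S i t * (y i / S i t) :=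
        mul_le_mul_of_nonneg_left h1 (hS i t).le
    _ = y i := by rw [mul_comm]; exact div_mul_cancel₀ _ (hS i t).ne'
end subeigen


section spec
variable {n : ℕ} {B : Matrix (Fin n) (Fin n) ℝ} (hB : ∀ i j, 0 ≤ B i j)
include hB

lemma spec_bddAbove : BddAbove { r : ℝ | ∃ (k : ℕ) (hk : 0 < k), k ≤ n ∧ ∃ f : Fin k → Fin n,
    r = (∏ t : Fin k, B (f t) (f ⟨((t : ℕ) + 1) % k, Nat.mod_lt _ hk⟩)) ^ ((k : ℝ)⁻¹) } := by
  set M := max 1 (⨆ p : Fin n × Fin n, B p.1 p.2) with hM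
  have hM1 : (1:ℝ) ≤ M := le_max_left _ _
  have hM0 : (0:ℝ) ≤ M := le_trans zero_le_one hM1
  have hMe : ∀ i j, B i j ≤ M := fun i j =>
    le_trans (le_fsup (fun p : Fin n × Fin n => B p.1 p.2) (i, j)) (le_max_right _ _)
  refine ⟨M, fun r hr => ?_⟩
  obtain ⟨k, hk, hkn, f, rfl⟩ := hr
  have hprodnn : 0 ≤ ∏ t : Fin k, B (f t) (f ⟨((t : ℕ) + 1) % k, Nat.mod_lt _ hk⟩) :=
    Finset.prod_nonneg fun t _ => hB _ _
  have hprod : (∏ t : Fin k, B (f t) (f ⟨((t : ℕ) + 1) % k, Nat.mod_lt _ hk⟩)) ≤ M ^ k := by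
    calc (∏ t : Fin k, B (f t) (f ⟨((t : ℕ) + 1) % k, Nat.mod_lt _ hk⟩))
        ≤ ∏ _t : Fin k, M := Finset.prod_le_prod (fun t _ => hB _ _) (fun t _ => hMe _ _)
      _ = M ^ k := by simp
  calc (∏ t : Fin k, B (f t) (f ⟨((t : ℕ) + 1) % k, Nat.mod_lt _ hk⟩)) ^ ((k : ℝ)⁻¹)
      ≤ (M ^ k) ^ ((k : ℝ)⁻¹) := Real.rpow_le_rpow hprodnn hprod (by positivity)
    _ = M := by
        rw [← Real.rpow_natCast M k, ← Real.rpow_mul hM0,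
          mul_inv_cancel₀ (by exact_mod_cast hk.ne' : (k:ℝ) ≠ 0), Real.rpow_one]

lemma mem_spec_le (d : ℕ) (hd : 0 < d) (hdn : d ≤ n) (c : Fin d → Fin n) :
    (∏ t : Fin d, B (c t) (c ⟨((t : ℕ) + 1) % d, Nat.mod_lt _ hd⟩)) ^ ((d : ℝ)⁻¹)
      ≤ mtSpecRad B :=
  le_csSup (spec_bddAbove hB) ⟨d, hd, hdn, c, rfl⟩

lemma cycle_prod_le_pow (d : ℕ) (hd : 0 < d) (hdn : d ≤ n) (c : Fin d → Fin n) :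
    (∏ t : Fin d, B (c t) (c ⟨((t : ℕ) + 1) % d, Nat.mod_lt _ hd⟩)) ≤ (mtSpecRad B) ^ d := by
  set P := ∏ t : Fin d, B (c t) (c ⟨((t : ℕ) + 1) % d, Nat.mod_lt _ hd⟩) with hP
  have hPnn : 0 ≤ P := Finset.prod_nonneg fun t _ => hB _ _
  have h1 : P ^ ((d : ℝ)⁻¹) ≤ mtSpecRad B := mem_spec_le hB d hd hdn c
  have h2 : (P ^ ((d : ℝ)⁻¹)) ^ d ≤ (mtSpecRad B) ^ d :=
    pow_le_pow_left₀ (Real.rpow_nonneg hPnn _) h1 d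
  have h3 : (P ^ ((d : ℝ)⁻¹)) ^ d = P := by
    rw [← Real.rpow_natCast (P ^ ((d : ℝ)⁻¹)) d, ← Real.rpow_mul hPnn,
      inv_mul_cancel₀ (by exact_mod_cast hd.ne' : (d:ℝ) ≠ 0), Real.rpow_one]
  rwa [h3] at h2

lemma mtSpecRad_pos (hBp : ∀ i j, 0 < B i j) (hn : 0 < n) : 0 < mtSpecRad B := by
  have h := mem_spec_le hB 1 one_pos hn (fun _ => (⟨0, hn⟩ : Fin n))
  have e : (∏ t : Fin 1, B (⟨0, hn⟩ : Fin n) ⟨0, hn⟩) ^ (((1:ℕ) : ℝ)⁻¹)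
      = B ⟨0, hn⟩ ⟨0, hn⟩ := by simp
  rw [e] at h
  exact lt_of_lt_of_le (hBp _ _) h

end spec


lemma rho_set_bdd {n : ℕ} (A : Matrix (Fin n) (Fin n) ℝ) (x : Fin n → ℝ) :
    BddAbove { r : ℝ | ∃ i j, 0 < A i j ∧ r = x i / (A i j * x j) } := by
  have hsub : { r : ℝ | ∃ i j, 0 < A i j ∧ r = x i / (A i j * x j) } ⊆
      Set.range (fun p : Fin n × Fin n => x p.1 / (A p.1 p.2 * x p.2)) := by
    rintro r ⟨i, j, _, rfl⟩; exact ⟨(i, j), rfl⟩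
  exact (Set.Finite.bddAbove (Set.finite_range _)).mono hsub

section main
variable {n m : ℕ} (hn : 0 < n) (hm : 0 < m)
  (A : Fin m → Matrix (Fin n) (Fin n) ℝ)
  (hA : ∀ l i j, 0 ≤ A l i j)
  (B : Matrix (Fin n) (Fin n) ℝ)
  (hB : ∀ i j, B i j = ⨆ l : Fin m, max (A l i j) (A l j i)⁻¹)

include hn hm hA in
lemma G_nonneg (x : Fin n → ℝ) (hx : ∀ i, 0 < x i) :
    0 ≤ ⨆ l : Fin m, mtRho (A l) x := by
  haveI : Nonempty (Fin m) := ⟨⟨0, hm⟩⟩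
  set l0 : Fin m := ⟨0, hm⟩
  set i0 : Fin n := ⟨0, hn⟩
  have h1 : (0:ℝ) ≤ A l0 i0 i0 * x i0 / x i0 :=
    div_nonneg (mul_nonneg (hA _ _ _) (hx _).le) (hx _).le
  have h2 : A l0 i0 i0 * x i0 / x i0 ≤ ⨆ p : Fin n × Fin n, A l0 p.1 p.2 * x p.2 / x p.1 :=
    le_fsup (fun p : Fin n × Fin n => A l0 p.1 p.2 * x p.2 / x p.1) (i0, i0)
  exact le_trans (le_trans h1 h2)
    (le_trans (le_max_left _ _) (le_fsup (fun l => mtRho (A l) x) l0))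

include hn hm hA hB in
lemma keyB (x : Fin n → ℝ) (hx : ∀ i, 0 < x i) (i j : Fin n) :
    B i j * (x j / x i) ≤ ⨆ l : Fin m, mtRho (A l) x := by
  haveI : Nonempty (Fin m) := ⟨⟨0, hm⟩⟩
  set G := ⨆ l : Fin m, mtRho (A l) x with hG
  have hG0 : 0 ≤ G := G_nonneg hn hm A hA x hx
  have hc : 0 < x j / x i := div_pos (hx j) (hx i)
  have per : ∀ l, max (A l i j) (A l j i)⁻¹ * (x j / x i) ≤ G := by
    intro l
    rw [max_mul_of_nonneg _ _ hc.le]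
    refine max_le ?_ ?_
    · have h1 : A l i j * x j / x i ≤ ⨆ p : Fin n × Fin n, A l p.1 p.2 * x p.2 / x p.1 :=
        le_fsup (fun p : Fin n × Fin n => A l p.1 p.2 * x p.2 / x p.1) (i, j)
      calc A l i j * (x j / x i) = A l i j * x j / x i := (mul_div_assoc _ _ _).symm
        _ ≤ _ := le_trans h1
            (le_trans (le_max_left _ _) (le_fsup (fun l => mtRho (A l) x) l))
    · by_cases h : 0 < A l j i
      · have hmem : x j / (A l j i * x i) ∈
            { r : ℝ | ∃ i' j', 0 < A l i' j' ∧ r = x i' / (A l i' j' * x j') } :=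
          ⟨j, i, h, rfl⟩
        have h1 : x j / (A l j i * x i) ≤
            sSup { r : ℝ | ∃ i' j', 0 < A l i' j' ∧ r = x i' / (A l i' j' * x j') } :=
          le_csSup (rho_set_bdd _ _) hmem
        have heq : (A l j i)⁻¹ * (x j / x i) = x j / (A l j i * x i) := by
          field_simp
        rw [heq]
        exact le_trans h1
          (le_trans (le_max_right _ _) (le_fsup (fun l => mtRho (A l) x) l))
      · have h0 : A l j i = 0 := le_antisymm (not_lt.mp h) (hA l j i)
        rw [h0, inv_zero, zero_mul]
        exact hG0
  have h2 : B i j ≤ G / (x j / x i) := by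
    rw [hB i j]
    refine fsup_le fun l => ?_
    rw [le_div_iff₀ hc]
    exact per l
  calc B i j * (x j / x i) ≤ (G / (x j / x i)) * (x j / x i) :=
        mul_le_mul_of_nonneg_right h2 hc.le
    _ = G := div_mul_cancel₀ _ hc.ne'

include hn hm hA hB in
lemma lower_bound (hBpos : ∀ i j, 0 < B i j) (x : Fin n → ℝ) (hx : ∀ i, 0 < x i) :
    mtSpecRad B ≤ ⨆ l : Fin m, mtRho (A l) x := by
  set G := ⨆ l : Fin m, mtRho (A l) x with hG
  have hG0 : 0 ≤ G := G_nonneg hn hm A hA x hx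
  refine Real.sSup_le ?_ hG0
  rintro r ⟨k, hk, hkn, f, rfl⟩
  haveI : NeZero k := ⟨hk.ne'⟩
  have hσ : ∀ t : Fin k, (⟨((t : ℕ) + 1) % k, Nat.mod_lt _ hk⟩ : Fin k) = t + 1 := by
    intro t
    apply Fin.ext
    show ((t : ℕ) + 1) % k = ((t : ℕ) + (1 % k)) % k
    conv_lhs => rw [Nat.add_mod]
    rw [Nat.mod_eq_of_lt t.isLt]
  have hprodrw : (∏ t : Fin k, B (f t) (f ⟨((t : ℕ) + 1) % k, Nat.mod_lt _ hk⟩))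
      = ∏ t : Fin k, B (f t) (f (t + 1)) :=
    Finset.prod_congr rfl fun t _ => by rw [hσ t]
  rw [hprodrw]
  have tele : (∏ t : Fin k, (x (f t) / x (f (t + 1)))) = 1 := by
    rw [Finset.prod_div_distrib]
    have he : (∏ t : Fin k, x (f (t + 1))) = ∏ t : Fin k, x (f t) :=
      Equiv.prod_comp (Equiv.addRight (1 : Fin k)) (fun t => x (f t))
    rw [he, div_self (ne_of_gt (Finset.prod_pos fun t _ => hx (f t)))]
  have factor : ∀ t : Fin k, B (f t) (f (t + 1)) =
      (B (f t) (f (t + 1)) * (x (f (t + 1)) / x (f t))) * (x (f t) / x (f (t + 1))) := by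
    intro t
    have h1 : x (f t) ≠ 0 := (hx _).ne'
    have h2 : x (f (t + 1)) ≠ 0 := (hx _).ne'
    field_simp
  have hP : (∏ t : Fin k, B (f t) (f (t + 1)))
      = ∏ t : Fin k, (B (f t) (f (t + 1)) * (x (f (t + 1)) / x (f t))) := by
    calc (∏ t : Fin k, B (f t) (f (t + 1)))
        = ∏ t : Fin k, ((B (f t) (f (t + 1)) * (x (f (t + 1)) / x (f t))) *
            (x (f t) / x (f (t + 1)))) := Finset.prod_congr rfl fun t _ => factor t
      _ = (∏ t : Fin k, (B (f t) (f (t + 1)) * (x (f (t + 1)) / x (f t)))) *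
            (∏ t : Fin k, (x (f t) / x (f (t + 1)))) := Finset.prod_mul_distrib
      _ = _ := by rw [tele, mul_one]
  have hle : (∏ t : Fin k, B (f t) (f (t + 1))) ≤ G ^ k := by
    rw [hP]
    calc (∏ t : Fin k, (B (f t) (f (t + 1)) * (x (f (t + 1)) / x (f t))))
        ≤ ∏ _t : Fin k, G := Finset.prod_le_prod
          (fun t _ => mul_nonneg (hBpos _ _).le (div_pos (hx _) (hx _)).le)
          (fun t _ => keyB hn hm A hA B hB x hx _ _)
      _ = G ^ k := by simp
  have hpnn : 0 ≤ ∏ t : Fin k, B (f t) (f (t + 1)) :=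
    Finset.prod_nonneg fun t _ => (hBpos _ _).le
  calc (∏ t : Fin k, B (f t) (f (t + 1))) ^ ((k : ℝ)⁻¹)
      ≤ (G ^ k) ^ ((k : ℝ)⁻¹) := Real.rpow_le_rpow hpnn hle (by positivity)
    _ = G := by
        rw [← Real.rpow_natCast G k, ← Real.rpow_mul hG0,
          mul_inv_cancel₀ (by exact_mod_cast hk.ne' : (k:ℝ) ≠ 0), Real.rpow_one]

include hn hA hB in
lemma rho_le_mu (μ : ℝ) (hμpos : 0 < μ) (x : Fin n → ℝ) (hx : ∀ i, 0 < x i)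
    (hsub : ∀ i j, B i j * x j ≤ μ * x i) (l : Fin m) : mtRho (A l) x ≤ μ := by
  haveI : Nonempty (Fin n) := ⟨⟨0, hn⟩⟩
  refine max_le ?_ ?_
  · refine fsup_le fun p => ?_
    rw [div_le_iff₀ (hx p.1)]
    have hAleB : A l p.1 p.2 ≤ B p.1 p.2 := by
      rw [hB]
      exact le_trans (le_max_left _ _)
        (le_fsup (fun l' => max (A l' p.1 p.2) (A l' p.2 p.1)⁻¹) l)
    calc A l p.1 p.2 * x p.2 ≤ B p.1 p.2 * x p.2 :=
          mul_le_mul_of_nonneg_right hAleB (hx p.2).le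
      _ ≤ μ * x p.1 := hsub _ _
  · refine Real.sSup_le ?_ hμpos.le
    rintro r ⟨i, j, hij, rfl⟩
    have hinv : (A l i j)⁻¹ ≤ B j i := by
      rw [hB]
      exact le_trans (le_max_right _ _)
        (le_fsup (fun l' => max (A l' j i) (A l' i j)⁻¹) l)
    have heq : x i / (A l i j * x j) = ((A l i j)⁻¹ * x i) / x j := by
      have h1 : A l i j ≠ 0 := hij.ne'
      have h2 : x j ≠ 0 := (hx j).ne'
      field_simp
    rw [heq, div_le_iff₀ (hx j)]
    calc (A l i j)⁻¹ * x i ≤ B j i * x i := mul_le_mul_of_nonneg_right hinv (hx i).le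
      _ ≤ μ * x j := hsub j i

end main


/-- For matrices `A_1, …, A_m` with
`B_{ij} = max_l max((A_l)_{ij}, ((A_l)_{ji})⁻)`, the minimum over positive vectors `x`
of `max_l ρ(A_l, x)` equals the max-times spectral radius `μ = λ(B)`, attained. -/
theorem mt_rho_multi_min {n m : ℕ} (hn : 1 ≤ n) (hm : 1 ≤ m)
    (A : Fin m → Matrix (Fin n) (Fin n) ℝ)
    (hA : ∀ l i j, 0 ≤ A l i j)
    (hAA : ∀ i j, ∃ l, 0 < A l i j ∨ 0 < A l j i)
    (B : Matrix (Fin n) (Fin n) ℝ)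
    (hB : ∀ i j, B i j = ⨆ l : Fin m, max (A l i j) (A l j i)⁻¹)
    (μ : ℝ) (hμ : μ = mtSpecRad B) :
    IsLeast { y : ℝ | ∃ x : Fin n → ℝ, (∀ i, 0 < x i) ∧
        y = ⨆ l : Fin m, mtRho (A l) x } μ := by
  subst hμ
  have hn' : 0 < n := hn
  have hm' : 0 < m := hm
  haveI : Nonempty (Fin n) := ⟨⟨0, hn'⟩⟩
  haveI : Nonempty (Fin m) := ⟨⟨0, hm'⟩⟩
  -- B is positive
  have hBpos : ∀ i j, 0 < B i j := by
    intro i j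
    obtain ⟨l, hl⟩ := hAA i j
    have h1 : 0 < max (A l i j) (A l j i)⁻¹ := by
      rcases hl with h | h
      · exact lt_of_lt_of_le h (le_max_left _ _)
      · exact lt_of_lt_of_le (inv_pos.mpr h) (le_max_right _ _)
    rw [hB i j]
    exact lt_of_lt_of_le h1 (le_fsup (fun l' => max (A l' i j) (A l' j i)⁻¹) l)
  have hBnn : ∀ i j, 0 ≤ B i j := fun i j => (hBpos i j).le
  set μ := mtSpecRad B with hμ
  have hμpos : 0 < μ := mtSpecRad_pos hBnn hBpos hn'
  -- scaled matrix
  set S : Matrix (Fin n) (Fin n) ℝ := Matrix.of (fun i j => μ⁻¹ * B i j) with hSdef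
  have hSe : ∀ i j, S i j = μ⁻¹ * B i j := fun i j => rfl
  have hSpos : ∀ i j, 0 < S i j := fun i j =>
    mul_pos (inv_pos.mpr hμpos) (hBpos i j)
  have hCS : ∀ (d : ℕ) (hd : 0 < d), d ≤ n → ∀ c : Fin d → Fin n,
      (∏ t : Fin d, S (c t) (c ⟨((t : ℕ) + 1) % d, Nat.mod_lt _ hd⟩)) ≤ 1 := by
    intro d hd hdn c
    have h1 : (∏ t : Fin d, S (c t) (c ⟨((t : ℕ) + 1) % d, Nat.mod_lt _ hd⟩))
        = μ⁻¹ ^ d * ∏ t : Fin d, B (c t) (c ⟨((t : ℕ) + 1) % d, Nat.mod_lt _ hd⟩) := by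
      calc (∏ t : Fin d, S (c t) (c ⟨((t : ℕ) + 1) % d, Nat.mod_lt _ hd⟩))
          = ∏ t : Fin d, (μ⁻¹ * B (c t) (c ⟨((t : ℕ) + 1) % d, Nat.mod_lt _ hd⟩)) :=
            Finset.prod_congr rfl fun t _ => hSe _ _
        _ = (∏ _t : Fin d, μ⁻¹) *
              ∏ t : Fin d, B (c t) (c ⟨((t : ℕ) + 1) % d, Nat.mod_lt _ hd⟩) :=
            Finset.prod_mul_distrib
        _ = _ := by simp
    rw [h1]
    calc μ⁻¹ ^ d * (∏ t : Fin d, B (c t) (c ⟨((t : ℕ) + 1) % d, Nat.mod_lt _ hd⟩))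
        ≤ μ⁻¹ ^ d * μ ^ d := mul_le_mul_of_nonneg_left
          (cycle_prod_le_pow hBnn d hd hdn c)
          (pow_nonneg (inv_nonneg.mpr hμpos.le) d)
      _ = 1 := by rw [← mul_pow, inv_mul_cancel₀ hμpos.ne', one_pow]
  -- the subeigenvector
  set j0 : Fin n := ⟨0, hn'⟩
  set y : Fin n → ℝ := fun i => ⨆ k' : Fin n, mtPow S (k' : ℕ) i j0 with hy
  have hypos : ∀ i, 0 < y i := fun i => star_col_pos hSpos hn' j0 i
  have hsubS : ∀ i t, S i t * y t ≤ y i := fun i t =>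
    star_col_subeigen hSpos hCS hn' j0 i t
  have hsubB : ∀ i t, B i t * y t ≤ μ * y i := by
    intro i t
    have hBit : B i t = μ * S i t := by
      rw [hSe, ← mul_assoc, mul_inv_cancel₀ hμpos.ne', one_mul]
    rw [hBit, mul_assoc]
    exact mul_le_mul_of_nonneg_left (hsubS i t) hμpos.le
  constructor
  · refine ⟨y, hypos, ?_⟩
    have hle : μ ≤ ⨆ l : Fin m, mtRho (A l) y :=
      lower_bound hn' hm' A hA B hB hBpos y hypos
    have hge : (⨆ l : Fin m, mtRho (A l) y) ≤ μ :=
      fsup_le fun l => rho_le_mu hn' A hA B hB μ hμpos y hypos hsubB l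
    exact le_antisymm hle hge
  · rintro yv ⟨x, hx, rfl⟩
    exact lower_bound hn' hm' A hA B hB hBpos x hx

end
end

section
/- Let n, m ≥ 1 and let A_1, …, A_m be n×n real matrices. Define B by B_{ij} = max_{1≤l≤m} max((A_l)_{ij}, −(A_l)_{ji}) and let μ = λ(B) be the maximum cycle mean of B. Then the minimum over all vectors x ∈ ℝ^n of max_{1≤l≤m} max_{i,j} |(A_l)_{ij} − (x_i − x_j)| equals μ, and the minimum is attained. -/
open scoped BigOperators

noncomputable section

namespace MPChebAux

variable {n : ℕ}

/-- Weight of the length-`k` path `p 0 → p 1 → ⋯ → p k`. -/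
def W (C : Matrix (Fin n) (Fin n) ℝ) (p : ℕ → Fin n) (k : ℕ) : ℝ :=
  ∑ t ∈ Finset.range k, C (p t) (p (t + 1))

/-- All weights of paths of length `< n` starting at `i`. -/
def pathSet (C : Matrix (Fin n) (Fin n) ℝ) (i : Fin n) : Set ℝ :=
  { r | ∃ k, k < n ∧ ∃ p : ℕ → Fin n, p 0 = i ∧ r = W C p k }

/-- Candidate optimal potential. -/
def xf (C : Matrix (Fin n) (Fin n) ℝ) (i : Fin n) : ℝ := sSup (pathSet C i)

lemma pathSet_nonempty (hn : 0 < n) (C : Matrix (Fin n) (Fin n) ℝ) (i : Fin n) :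
    (pathSet C i).Nonempty :=
  ⟨0, 0, hn, fun _ => i, rfl, by simp [W]⟩

lemma pathSet_bddAbove (hn : 0 < n) (C : Matrix (Fin n) (Fin n) ℝ) (i : Fin n) :
    BddAbove (pathSet C i) := by
  haveI : Nonempty (Fin n) := ⟨⟨0, hn⟩⟩
  refine ⟨n * (⨆ q : Fin n × Fin n, |C q.1 q.2|), ?_⟩
  rintro r ⟨k, hk, p, hp0, rfl⟩
  set M := ⨆ q : Fin n × Fin n, |C q.1 q.2| with hM
  have hMb : ∀ a b : Fin n, C a b ≤ M := fun a b =>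
    le_trans (le_abs_self _)
      (le_ciSup (f := fun q : Fin n × Fin n => |C q.1 q.2|)
        (Set.Finite.bddAbove (Set.finite_range _)) (a, b))
  have hM0 : 0 ≤ M :=
    le_trans (abs_nonneg (C i i))
      (le_ciSup (f := fun q : Fin n × Fin n => |C q.1 q.2|)
        (Set.Finite.bddAbove (Set.finite_range _)) (i, i))
  calc W C p k ≤ ∑ _t ∈ Finset.range k, M :=
        Finset.sum_le_sum fun t _ => hMb _ _
    _ = (k : ℝ) * M := by simp [Finset.sum_const, nsmul_eq_mul]
    _ ≤ (n : ℝ) * M := mul_le_mul_of_nonneg_right (by exact_mod_cast hk.le) hM0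

/-- Key lemma: if all cycles (of length `≤ n`) have nonpositive weight, then any
path weight is bounded by the sup over short paths with the same start. -/
lemma W_le_xf (hn : 0 < n) (C : Matrix (Fin n) (Fin n) ℝ)
    (hcyc : ∀ d, 0 < d → d ≤ n → ∀ f : ℕ → Fin n, f d = f 0 →
      ∑ t ∈ Finset.range d, C (f t) (f (t + 1)) ≤ 0) :
    ∀ k (p : ℕ → Fin n), W C p k ≤ xf C (p 0) := by
  intro k
  induction k using Nat.strong_induction_on with
  | _ k ih =>
    intro p
    by_cases hk : k < n
    · exact le_csSup (pathSet_bddAbove hn C (p 0)) ⟨k, hk, p, rfl, rfl⟩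
    push_neg at hk
    have main : ∀ a b, a < b → b ≤ n → p a = p b → W C p k ≤ xf C (p 0) := by
      intro a b hab hbn hpe
      set d := b - a with hd
      have hd0 : 0 < d := Nat.sub_pos_of_lt hab
      have hadb : a + d = b := by omega
      have hdn : d ≤ n := by omega
      have hbk : b ≤ n := hbn
      have hbk' : b ≤ k := le_trans hbn hk
      set q : ℕ → Fin n := fun t => if t < a then p t else p (t + d) with hq
      have hqa : ∀ t, t ≤ a → q t = p t := by
        intro t ht
        rcases lt_or_eq_of_le ht with h | h
        · simp [hq, h]
        · subst h
          simp only [hq, lt_irrefl, if_false]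
          rw [hadb, ← hpe]
      have hqb : ∀ t, a ≤ t → q t = p (t + d) := by
        intro t ht
        simp [hq, Nat.not_lt.mpr ht]
      have hq0 : q 0 = p 0 := hqa 0 (Nat.zero_le _)
      -- the spliced path is shorter
      have hkd : k - d < k := Nat.sub_lt (by omega) hd0
      have hak : a ≤ k - d := by omega
      -- cycle weight is nonpositive
      have hS2 : ∑ t ∈ Finset.Ico a b, C (p t) (p (t + 1)) ≤ 0 := by
        have h1 := hcyc d hd0 hdn (fun t => p (a + t)) (by simp [hadb, ← hpe])
        have h2 : ∑ t ∈ Finset.Ico a b, C (p t) (p (t + 1)) =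
            ∑ t ∈ Finset.range d, C (p (a + t)) (p (a + t + 1)) := by
          rw [Finset.sum_Ico_eq_sum_range]
        have h3 : ∑ t ∈ Finset.range d, C (p (a + t)) (p (a + t + 1)) =
            ∑ t ∈ Finset.range d, C (p (a + t)) (p (a + (t + 1))) := by
          refine Finset.sum_congr rfl fun t _ => by rw [Nat.add_assoc]
        rw [h2, h3]; exact h1
      -- weight identity for the spliced path
      have hWq : W C q (k - d) = (∑ t ∈ Finset.range a, C (p t) (p (t + 1))) +
          ∑ t ∈ Finset.Ico b k, C (p t) (p (t + 1)) := by
        have hsplit : W C q (k - d) = (∑ t ∈ Finset.range a, C (q t) (q (t + 1))) +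
            ∑ t ∈ Finset.Ico a (k - d), C (q t) (q (t + 1)) := by
          rw [W, ← Finset.sum_range_add_sum_Ico _ hak]
        have e1 : ∑ t ∈ Finset.range a, C (q t) (q (t + 1)) =
            ∑ t ∈ Finset.range a, C (p t) (p (t + 1)) := by
          refine Finset.sum_congr rfl fun t ht => ?_
          have ht' : t < a := Finset.mem_range.mp ht
          rw [hqa t ht'.le, hqa (t + 1) ht']
        have e2 : ∑ t ∈ Finset.Ico a (k - d), C (q t) (q (t + 1)) =
            ∑ t ∈ Finset.Ico b k, C (p t) (p (t + 1)) := by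
          have e2a : ∑ t ∈ Finset.Ico a (k - d), C (q t) (q (t + 1)) =
              ∑ t ∈ Finset.Ico a (k - d), C (p (t + d)) (p (t + d + 1)) := by
            refine Finset.sum_congr rfl fun t ht => ?_
            have ht' : a ≤ t := (Finset.mem_Ico.mp ht).1
            rw [hqb t ht', hqb (t + 1) (le_trans ht' (Nat.le_succ t))]
            have h5 : t + 1 + d = t + d + 1 := by omega
            rw [h5]
          rw [e2a, Finset.sum_Ico_eq_sum_range, Finset.sum_Ico_eq_sum_range]
          have hcard : k - d - a = k - b := by omega
          rw [hcard]
          refine Finset.sum_congr rfl fun t _ => ?_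
          have : a + t + d = b + t := by omega
          rw [this]
        rw [hsplit, e1, e2]
      -- weight identity for the original path
      have hWp : W C p k = (∑ t ∈ Finset.range a, C (p t) (p (t + 1))) +
          (∑ t ∈ Finset.Ico a b, C (p t) (p (t + 1))) +
          ∑ t ∈ Finset.Ico b k, C (p t) (p (t + 1)) := by
        rw [W, ← Finset.sum_range_add_sum_Ico _ hbk',
          ← Finset.sum_range_add_sum_Ico _ hab.le]
      have h4 : W C p k ≤ W C q (k - d) := by rw [hWp, hWq]; linarith
      calc W C p k ≤ W C q (k - d) := h4
        _ ≤ xf C (q 0) := ih _ hkd q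
        _ = xf C (p 0) := by rw [hq0]
    obtain ⟨a, ha, b, hb, hne, he⟩ :=
      Finset.exists_ne_map_eq_of_card_lt_of_maps_to
        (s := Finset.range (n + 1)) (t := (Finset.univ : Finset (Fin n)))
        (by simp [hn]) (fun x _ => Finset.mem_univ (p x))
    have ha' : a ≤ n := by simpa using Nat.lt_succ_iff.mp (Finset.mem_range.mp ha)
    have hb' : b ≤ n := by simpa using Nat.lt_succ_iff.mp (Finset.mem_range.mp hb)
    rcases hne.lt_or_gt with h | h
    · exact main a b h hb' he
    · exact main b a h ha' he.symm

end MPChebAux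

/-- For real matrices `A_1, …, A_m` with
`B_{ij} = max_l max((A_l)_{ij}, −(A_l)_{ji})`, the minimum over `x ∈ ℝⁿ` of
`max_l max_{i,j} |(A_l)_{ij} − (x_i − x_j)|` equals the maximum cycle mean
`μ = λ(B)`, and it is attained. -/
theorem mp_cheb_multi_min {n m : ℕ} (hn : 1 ≤ n) (hm : 1 ≤ m)
    (A : Fin m → Matrix (Fin n) (Fin n) ℝ)
    (B : Matrix (Fin n) (Fin n) ℝ)
    (hB : ∀ i j, B i j = ⨆ l : Fin m, max (A l i j) (-(A l j i)))
    (μ : ℝ) (hμ : μ = mpCycleMean B) :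
    IsLeast { y : ℝ | ∃ x : Fin n → ℝ,
        y = ⨆ l : Fin m, ⨆ p : Fin n × Fin n, |A l p.1 p.2 - (x p.1 - x p.2)| } μ := by
  have hn0 : 0 < n := hn
  haveI : Nonempty (Fin n) := ⟨⟨0, hn0⟩⟩
  haveI : Nonempty (Fin m) := ⟨⟨0, hm⟩⟩
  set S : Set ℝ := { r : ℝ | ∃ (k : ℕ) (hk : 0 < k), k ≤ n ∧ ∃ f : Fin k → Fin n,
    r = (∑ t : Fin k, B (f t) (f ⟨((t : ℕ) + 1) % k, Nat.mod_lt _ hk⟩)) / (k : ℝ) } with hS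
  have hμS : μ = sSup S := hμ
  have hSne : S.Nonempty :=
    ⟨_, 1, one_pos, hn, fun _ => (⟨0, hn0⟩ : Fin n), rfl⟩
  have hSbdd : BddAbove S := by
    set MB := ⨆ q : Fin n × Fin n, |B q.1 q.2| with hMB
    have hMb : ∀ a b : Fin n, B a b ≤ MB := fun a b =>
      le_trans (le_abs_self _)
        (le_ciSup (f := fun q : Fin n × Fin n => |B q.1 q.2|)
          (Set.Finite.bddAbove (Set.finite_range _)) (a, b))
    refine ⟨MB, ?_⟩
    rintro r ⟨k, hk, hkn, f, rfl⟩
    rw [div_le_iff₀ (by exact_mod_cast hk)]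
    calc ∑ t : Fin k, B (f t) (f ⟨((t : ℕ) + 1) % k, Nat.mod_lt _ hk⟩)
        ≤ ∑ _t : Fin k, MB := Finset.sum_le_sum fun t _ => hMb _ _
      _ = MB * (k : ℝ) := by simp [Finset.card_univ, nsmul_eq_mul, mul_comm]
  -- Lower bound: every cycle mean is at most the Chebyshev error of any x
  have hBmem : ∀ r ∈ S, ∀ x : Fin n → ℝ,
      r ≤ ⨆ l, ⨆ p : Fin n × Fin n, |A l p.1 p.2 - (x p.1 - x p.2)| := by
    rintro r ⟨k, hk, hkn, f, rfl⟩ x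
    set Mx := ⨆ l, ⨆ p : Fin n × Fin n, |A l p.1 p.2 - (x p.1 - x p.2)| with hMx
    have habs : ∀ (l : Fin m) (i j : Fin n), |A l i j - (x i - x j)| ≤ Mx := by
      intro l i j
      calc |A l i j - (x i - x j)|
          ≤ ⨆ p : Fin n × Fin n, |A l p.1 p.2 - (x p.1 - x p.2)| :=
            le_ciSup (f := fun p : Fin n × Fin n => |A l p.1 p.2 - (x p.1 - x p.2)|)
              (Set.Finite.bddAbove (Set.finite_range _)) (i, j)
        _ ≤ Mx := le_ciSup
              (f := fun l => ⨆ p : Fin n × Fin n, |A l p.1 p.2 - (x p.1 - x p.2)|)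
              (Set.Finite.bddAbove (Set.finite_range _)) l
    have hBle : ∀ i j : Fin n, B i j ≤ Mx + (x i - x j) := by
      intro i j
      rw [hB]
      refine ciSup_le fun l => max_le ?_ ?_
      · have h1 := habs l i j
        have h2 := le_abs_self (A l i j - (x i - x j))
        linarith
      · have h1 := habs l j i
        have h2 := neg_abs_le (A l j i - (x j - x i))
        linarith
    set σ : Fin k → Fin k := fun t => ⟨((t : ℕ) + 1) % k, Nat.mod_lt _ hk⟩ with hσ
    have hσinj : Function.Injective σ := by
      intro s t h
      have h1 : ((s : ℕ) + 1) % k = ((t : ℕ) + 1) % k := congrArg Fin.val h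
      have h3 : (s : ℕ) ≡ (t : ℕ) [MOD k] := Nat.ModEq.add_right_cancel' 1 h1
      have h4 : (s : ℕ) % k = (t : ℕ) % k := h3
      rw [Nat.mod_eq_of_lt s.isLt, Nat.mod_eq_of_lt t.isLt] at h4
      exact Fin.ext h4
    have hσsum : ∑ t : Fin k, x (f (σ t)) = ∑ t : Fin k, x (f t) :=
      Fintype.sum_bijective σ (Finite.injective_iff_bijective.mp hσinj)
        (fun t => x (f (σ t))) (fun t => x (f t)) (fun t => rfl)
    rw [div_le_iff₀ (show (0 : ℝ) < (k : ℝ) by exact_mod_cast hk)]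
    have hsum2 : ∑ t : Fin k, (Mx + (x (f t) - x (f (σ t)))) = Mx * (k : ℝ) := by
      rw [Finset.sum_add_distrib, Finset.sum_sub_distrib, hσsum]
      simp [Finset.card_univ, nsmul_eq_mul, mul_comm]
    calc ∑ t : Fin k, B (f t) (f (σ t))
        ≤ ∑ t : Fin k, (Mx + (x (f t) - x (f (σ t)))) :=
          Finset.sum_le_sum fun t _ => hBle _ _
      _ = Mx * (k : ℝ) := hsum2
  have hlow : ∀ x : Fin n → ℝ,
      μ ≤ ⨆ l, ⨆ p : Fin n × Fin n, |A l p.1 p.2 - (x p.1 - x p.2)| := by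
    intro x
    rw [hμS]
    exact csSup_le hSne fun r hr => hBmem r hr x
  -- Attainment: the shifted matrix and its potential
  set C : Matrix (Fin n) (Fin n) ℝ := fun i j => B i j - μ with hC
  have hCa : ∀ i j, C i j = B i j - μ := fun i j => rfl
  have hcyc : ∀ d, 0 < d → d ≤ n → ∀ f : ℕ → Fin n, f d = f 0 →
      ∑ t ∈ Finset.range d, C (f t) (f (t + 1)) ≤ 0 := by
    intro d hd hdn f hf
    have hmem : (∑ t : Fin d, B (f (t : ℕ))
        (f (((t : ℕ) + 1) % d))) / (d : ℝ) ∈ S :=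
      ⟨d, hd, hdn, fun t => f (t : ℕ), rfl⟩
    have hle : (∑ t : Fin d, B (f (t : ℕ)) (f (((t : ℕ) + 1) % d))) / (d : ℝ) ≤ μ := by
      rw [hμS]; exact le_csSup hSbdd hmem
    have h1 : ∑ t : Fin d, B (f (t : ℕ)) (f (((t : ℕ) + 1) % d)) =
        ∑ t ∈ Finset.range d, B (f t) (f ((t + 1) % d)) :=
      Fin.sum_univ_eq_sum_range (fun j => B (f j) (f ((j + 1) % d))) d
    have h2 : ∑ t ∈ Finset.range d, B (f t) (f ((t + 1) % d)) =
        ∑ t ∈ Finset.range d, B (f t) (f (t + 1)) := by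
      refine Finset.sum_congr rfl fun t ht => ?_
      have ht' : t + 1 ≤ d := Finset.mem_range.mp ht
      rcases eq_or_lt_of_le ht' with h | h
      · rw [h, Nat.mod_self, hf]
      · rw [Nat.mod_eq_of_lt h]
    rw [h1, h2, div_le_iff₀ (show (0 : ℝ) < (d : ℝ) by exact_mod_cast hd)] at hle
    have h3 : ∑ t ∈ Finset.range d, C (f t) (f (t + 1)) =
        (∑ t ∈ Finset.range d, B (f t) (f (t + 1))) - (d : ℝ) * μ := by
      simp only [hCa]
      rw [Finset.sum_sub_distrib]
      simp [Finset.card_range, nsmul_eq_mul]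
    rw [h3]
    nlinarith [hle]
  set x0 : Fin n → ℝ := MPChebAux.xf C with hx0
  have hstep : ∀ i j : Fin n, B i j + x0 j - x0 i ≤ μ := by
    intro i j
    have hxle : x0 j ≤ x0 i - C i j := by
      refine csSup_le (MPChebAux.pathSet_nonempty hn0 C j) ?_
      rintro r ⟨k, hkn, p, hp0, rfl⟩
      set q : ℕ → Fin n := fun t => if t = 0 then i else p (t - 1) with hq
      have hterm : ∀ s : ℕ, C (q (s + 1)) (q (s + 1 + 1)) = C (p s) (p (s + 1)) := by
        intro s; simp [hq]
      have h0 : C (q 0) (q (0 + 1)) = C i j := by simp [hq, hp0]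
      have hWq : MPChebAux.W C q (k + 1) = C i j + MPChebAux.W C p k := by
        rw [MPChebAux.W, Finset.sum_range_succ', h0,
          Finset.sum_congr rfl fun s _ => hterm s]
        rw [MPChebAux.W, add_comm]
      have hle2 := MPChebAux.W_le_xf hn0 C hcyc (k + 1) q
      have hq0 : q 0 = i := by simp [hq]
      rw [hq0, hWq] at hle2
      linarith
    have h4 := hCa i j
    linarith
  have habs2 : ∀ (l : Fin m) (i j : Fin n), |A l i j - (x0 i - x0 j)| ≤ μ := by
    intro l i j
    have hA1 : A l i j ≤ B i j := by
      rw [hB]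
      exact le_trans (le_max_left _ _)
        (le_ciSup (f := fun l => max (A l i j) (-(A l j i)))
          (Set.Finite.bddAbove (Set.finite_range _)) l)
    have hA2 : -(A l i j) ≤ B j i := by
      rw [hB]
      exact le_trans (le_max_right _ _)
        (le_ciSup (f := fun l => max (A l j i) (-(A l i j)))
          (Set.Finite.bddAbove (Set.finite_range _)) l)
    have h1 := hstep i j
    have h2 := hstep j i
    rw [abs_le]
    constructor <;> linarith
  have hup : (⨆ l, ⨆ p : Fin n × Fin n, |A l p.1 p.2 - (x0 p.1 - x0 p.2)|) ≤ μ :=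
    ciSup_le fun l => ciSup_le fun p => habs2 l p.1 p.2
  constructor
  · exact ⟨x0, (le_antisymm hup (hlow x0)).symm⟩
  · rintro y ⟨x, rfl⟩
    exact hlow x

end
end
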